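/- For every odd positive integer n, ∑_{k=0}^n binomial(n,k)·binomial(n+k,k)·(binomial(2k,k)/(-4)^k)·D_k = 0, where D_k is the sequence of rational numbers defined below. -/

import Mathlib

open Finset Polynomial

/-- `D_n = (∑_{i=1}^n 1/(2i-1))² - ∑_{i=1}^n 1/(2i-1)²` (so `D_0 = 0`). -/
def D (n : ℕ) : ℚ :=
  (∑ i ∈ Finset.Icc 1 n, (1 : ℚ) / (2 * i - 1)) ^ 2
    - ∑ i ∈ Finset.Icc 1 n, (1 : ℚ) / (2 * i - 1) ^ 2


noncomputable abbrev ch (x : ℚ) (k : ℕ) : ℚ := Ring.choose x k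

lemma ch_zero (x : ℚ) : ch x 0 = 1 := Ring.choose_zero_right x

lemma ch_succ (x : ℚ) (k : ℕ) : ch x (k + 1) = ch x k * (x - k) / (k + 1) := by
  have h1 := Ring.descPochhammer_eq_factorial_smul_choose x (k+1)
  have h2 := Ring.descPochhammer_eq_factorial_smul_choose x k
  rw [descPochhammer_succ_right, smeval_mul, h2] at h1
  have h4 : ((X : ℤ[X]) - ((k:ℕ) : ℤ[X])).smeval x = x - k := by
    rw [smeval_sub, smeval_X, smeval_natCast] <;> simp
  rw [h4, nsmul_eq_mul, nsmul_eq_mul] at h1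
  have hf : (((k+1).factorial : ℚ)) ≠ 0 := by positivity
  have hk1 : ((k:ℚ) + 1) ≠ 0 := by positivity
  rw [Nat.factorial_succ, Nat.cast_mul] at h1
  field_simp
  have hkf : ((k.factorial : ℚ)) ≠ 0 := by positivity
  apply mul_left_cancel₀ hkf
  push_cast at h1 ⊢
  unfold ch
  linear_combination -h1

lemma ch_absorb (x : ℚ) (k : ℕ) : ch x k * (x + 1) = ch (x + 1) k * (x + 1 - k) := by
  induction k with
  | zero => simp [ch_zero]
  | succ k ih =>
    rw [ch_succ, ch_succ]
    push_cast
    linear_combination ((x - k) / ((k : ℚ) + 1)) * ih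

lemma ch_reflect (u : ℚ) (k : ℕ) : ch (-1 - u) k = (-1) ^ k * ch (u + k) k := by
  induction k with
  | zero => simp [ch_zero]
  | succ k ih =>
    have habs := ch_absorb (u + k) k
    rw [ch_succ, ch_succ, ih]
    push_cast
    rw [show u + ((k : ℚ) + 1) = u + (k : ℚ) + 1 by ring]
    linear_combination (-(-1 : ℚ) ^ k / ((k : ℚ) + 1)) * habs

lemma ch_nat (m j : ℕ) : ch (m : ℚ) j = m.choose j := Ring.choose_natCast m j

lemma ch_vand (u : ℚ) (k : ℕ) :
    ch (u + k) k = ∑ j ∈ Finset.range (k + 1), (k.choose j : ℚ) * ch u j := by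
  unfold ch
  rw [Ring.add_choose_eq k (Commute.all _ _)]
  rw [Finset.Nat.sum_antidiagonal_eq_sum_range_succ_mk]
  refine Finset.sum_congr rfl fun j hj => ?_
  have hjk : j ≤ k := Nat.lt_succ_iff.mp (Finset.mem_range.mp hj)
  simp only []
  rw [show Ring.choose ((k:ℕ):ℚ) (k - j) = ((k.choose (k-j) : ℕ) : ℚ) from ch_nat k (k-j),
    Nat.choose_symm hjk, mul_comm]

lemma altsum (d j : ℕ) :
    ∑ m ∈ Finset.range (d + 1),
        (-1 : ℚ) ^ m * (d.choose m : ℚ) * ((d + 2 * j + m).choose (d + j) : ℚ)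
      = (-1) ^ d * ((d + 2 * j).choose j : ℚ) := by
  have hexp : ((-X : ℚ[X]) ^ d)
      = ∑ m ∈ Finset.range (d + 1), Polynomial.C ((-1 : ℚ) ^ m * (d.choose m : ℚ)) * (X + 1) ^ m := by
    have h1 : (-X : ℚ[X]) = -(X + 1) + 1 := by ring
    rw [h1, add_pow]
    refine Finset.sum_congr rfl fun m _ => ?_
    rw [neg_pow (X + 1 : ℚ[X]) m]
    simp only [map_mul, map_pow, map_neg, map_one, Polynomial.C_eq_natCast]
    ring
  have hpoly : ((X + 1 : ℚ[X]) ^ (d + 2 * j)) * (-X) ^ d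
      = ∑ m ∈ Finset.range (d + 1),
          Polynomial.C ((-1 : ℚ) ^ m * (d.choose m : ℚ)) * (X + 1) ^ (d + 2 * j + m) := by
    rw [hexp, Finset.mul_sum]
    refine Finset.sum_congr rfl fun m _ => ?_
    rw [pow_add]
    ring
  have hc := congrArg (fun p : ℚ[X] => p.coeff (d + j)) hpoly
  simp only [finset_sum_coeff, Polynomial.coeff_C_mul, coeff_X_add_one_pow] at hc
  have hval : ((X + 1 : ℚ[X]) ^ (d + 2 * j) * (-X) ^ d).coeff (d + j)
      = (-1) ^ d * ((d + 2 * j).choose j : ℚ) := by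
    have h2 : ((X + 1 : ℚ[X]) ^ (d + 2 * j)) * (-X) ^ d
        = Polynomial.C ((-1 : ℚ) ^ d) * ((X + 1) ^ (d + 2 * j) * X ^ d) := by
      rw [show (Polynomial.C ((-1 : ℚ) ^ d)) = (-1 : ℚ[X]) ^ d by
        simp only [map_pow, map_neg, map_one]]
      ring
    rw [h2, Polynomial.coeff_C_mul, coeff_mul_X_pow', if_pos (Nat.le_add_right d j),
      Nat.add_sub_cancel_left, coeff_X_add_one_pow]
  rw [← hval, hc]

lemma star (n j : ℕ) (hj : j ≤ n) :
    ∑ k ∈ Finset.range (n + 1),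
        (-1 : ℚ) ^ k * (n.choose k : ℚ) * ((n + k).choose k : ℚ) * (k.choose j : ℚ)
      = (-1) ^ n * (n.choose j : ℚ) * ((n + j).choose j : ℚ) := by
  set d := n - j with hd
  have hnd : n = d + j := by omega
  rw [Finset.range_eq_Ico, ← Finset.sum_Ico_consecutive _ (Nat.zero_le j)
    (by omega : j ≤ n + 1)]
  have h0 : ∑ k ∈ Finset.Ico 0 j,
      (-1 : ℚ) ^ k * (n.choose k : ℚ) * ((n + k).choose k : ℚ) * (k.choose j : ℚ) = 0 := by
    refine Finset.sum_eq_zero fun k hk => ?_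
    have : k.choose j = 0 := Nat.choose_eq_zero_of_lt (Finset.mem_Ico.mp hk).2
    rw [this]
    push_cast
    ring
  rw [h0, zero_add, Finset.sum_Ico_eq_sum_range]
  have hrange : n + 1 - j = d + 1 := by omega
  rw [hrange]
  have hterm : ∀ m ∈ Finset.range (d + 1),
      (-1 : ℚ) ^ (j + m) * (n.choose (j + m) : ℚ) * ((n + (j + m)).choose (j + m) : ℚ)
          * ((j + m).choose j : ℚ)
        = ((-1 : ℚ) ^ j * (n.choose j : ℚ))
          * ((-1 : ℚ) ^ m * (d.choose m : ℚ) * ((d + 2 * j + m).choose (d + j) : ℚ)) := by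
    intro m hm
    have hm' : m ≤ d := Nat.lt_succ_iff.mp (Finset.mem_range.mp hm)
    have h1 : n.choose (j + m) * (j + m).choose j = n.choose j * d.choose m := by
      have := Nat.choose_mul (n := n) (show j ≤ j + m by omega)
      simpa [hd, Nat.add_sub_cancel_left] using this
    have h2 : (n + (j + m)).choose (j + m) = (d + 2 * j + m).choose (d + j) := by
      have hsym := Nat.choose_symm (show j + m ≤ n + (j + m) by omega)
      have : n + (j + m) - (j + m) = n := by omega
      rw [this] at hsym
      rw [← hsym]
      congr 1 <;> omega
    have h1q : (n.choose (j + m) : ℚ) * ((j + m).choose j : ℚ)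
        = (n.choose j : ℚ) * (d.choose m : ℚ) := by exact_mod_cast congrArg (fun t : ℕ => (t : ℚ)) h1
    rw [h2, pow_add]
    linear_combination ((-1 : ℚ) ^ j * (-1 : ℚ) ^ m * ((d + 2 * j + m).choose (d + j) : ℚ)) * h1q
  rw [Finset.sum_congr rfl hterm, ← Finset.mul_sum, altsum d j]
  have hnj : n + j = d + 2 * j := by omega
  rw [hnj]
  rw [show ((-1 : ℚ) ^ n) = (-1 : ℚ) ^ j * (-1 : ℚ) ^ d by rw [← pow_add]; congr 1; omega]
  ring

lemma parity (n : ℕ) (hn : Odd n) (u : ℚ) :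
    ∑ k ∈ Finset.range (n + 1),
        (n.choose k : ℚ) * ((n + k).choose k : ℚ) * ch (-1 - u) k
      = - ∑ k ∈ Finset.range (n + 1),
          (n.choose k : ℚ) * ((n + k).choose k : ℚ) * ch u k := by
  calc
    ∑ k ∈ Finset.range (n + 1), (n.choose k : ℚ) * ((n + k).choose k : ℚ) * ch (-1 - u) k
      = ∑ k ∈ Finset.range (n + 1), ∑ j ∈ Finset.range (n + 1),
          (-1 : ℚ) ^ k * (n.choose k : ℚ) * ((n + k).choose k : ℚ) * (k.choose j : ℚ)
            * ch u j := by
        refine Finset.sum_congr rfl fun k hk => ?_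
        have hk' : k + 1 ≤ n + 1 := Finset.mem_range.mp hk
        rw [ch_reflect, ch_vand]
        rw [show ∑ j ∈ Finset.range (k + 1), (k.choose j : ℚ) * ch u j
            = ∑ j ∈ Finset.range (n + 1), (k.choose j : ℚ) * ch u j from
          Finset.sum_subset (Finset.range_subset_range.mpr hk') (fun j _ hj => by
            have : k < j := by
              by_contra h
              exact hj (Finset.mem_range.mpr (by omega))
            simp [Nat.choose_eq_zero_of_lt this])]
        rw [Finset.mul_sum, Finset.mul_sum]
        refine Finset.sum_congr rfl fun j _ => ?_
        ring
    _ = ∑ j ∈ Finset.range (n + 1),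
          (∑ k ∈ Finset.range (n + 1),
            (-1 : ℚ) ^ k * (n.choose k : ℚ) * ((n + k).choose k : ℚ) * (k.choose j : ℚ))
          * ch u j := by
        rw [Finset.sum_comm]
        refine Finset.sum_congr rfl fun j _ => ?_
        rw [Finset.sum_mul]
    _ = ∑ j ∈ Finset.range (n + 1),
          ((-1 : ℚ) ^ n * (n.choose j : ℚ) * ((n + j).choose j : ℚ)) * ch u j := by
        refine Finset.sum_congr rfl fun j hj => ?_
        rw [star n j (Nat.lt_succ_iff.mp (Finset.mem_range.mp hj))]
    _ = - ∑ k ∈ Finset.range (n + 1),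
          (n.choose k : ℚ) * ((n + k).choose k : ℚ) * ch u k := by
        rw [hn.neg_one_pow]
        rw [← Finset.sum_neg_distrib]
        refine Finset.sum_congr rfl fun j _ => ?_
        ring

def hh (k : ℕ) : ℚ := ∑ i ∈ Finset.Icc 1 k, (1 : ℚ) / (2 * i - 1)

lemma hh_succ (k : ℕ) : hh (k + 1) = hh k + 1 / (2 * (k : ℚ) + 1) := by
  unfold hh
  rw [Finset.sum_Icc_succ_top (by omega : 1 ≤ k + 1)]
  push_cast
  rw [show 2 * ((k : ℚ) + 1) - 1 = 2 * (k : ℚ) + 1 by ring]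

lemma D_succ (k : ℕ) : D (k + 1) = D k + 2 / (2 * (k : ℚ) + 1) * hh k := by
  have hk : (2 * (k : ℚ) + 1) ≠ 0 := by positivity
  unfold D hh
  rw [Finset.sum_Icc_succ_top (by omega : 1 ≤ k + 1),
    Finset.sum_Icc_succ_top (by omega : 1 ≤ k + 1)]
  push_cast
  rw [show 2 * ((k : ℚ) + 1) - 1 = 2 * (k : ℚ) + 1 by ring]
  field_simp
  ring

noncomputable def q : ℕ → ℚ[X]
  | 0 => 1
  | (k + 1) => q k * (1 - Polynomial.C (2 / (2 * (k : ℚ) + 1)) * X)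

noncomputable def r : ℕ → ℚ[X]
  | 0 => 1
  | (k + 1) => r k * (1 + Polynomial.C (2 / (2 * (k : ℚ) + 1)) * X)

lemma q_coeffs (k : ℕ) :
    (q k).coeff 0 = 1 ∧ (q k).coeff 1 = -2 * hh k ∧ (q k).coeff 2 = 2 * D k := by
  induction k with
  | zero => simp [q, hh, D, Polynomial.coeff_one]
  | succ k ih =>
    obtain ⟨h0, h1, h2⟩ := ih
    have hexp : q (k + 1) = q k - Polynomial.C (2 / (2 * (k : ℚ) + 1)) * (q k * X) := by
      rw [q]; ring
    refine ⟨?_, ?_, ?_⟩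
    · rw [hexp]
      simp [h0, Polynomial.coeff_mul_X_zero]
    · have hm : (q k * X).coeff 1 = (q k).coeff 0 := Polynomial.coeff_mul_X (q k) 0
      rw [hexp, Polynomial.coeff_sub, Polynomial.coeff_C_mul, hm, h0, h1, hh_succ]
      ring
    · have hm : (q k * X).coeff 2 = (q k).coeff 1 := Polynomial.coeff_mul_X (q k) 1
      rw [hexp, Polynomial.coeff_sub, Polynomial.coeff_C_mul, hm, h1, h2, D_succ]
      ring

lemma r_coeffs (k : ℕ) :
    (r k).coeff 0 = 1 ∧ (r k).coeff 1 = 2 * hh k ∧ (r k).coeff 2 = 2 * D k := by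
  induction k with
  | zero => simp [r, hh, D, Polynomial.coeff_one]
  | succ k ih =>
    obtain ⟨h0, h1, h2⟩ := ih
    have hexp : r (k + 1) = r k + Polynomial.C (2 / (2 * (k : ℚ) + 1)) * (r k * X) := by
      rw [r]; ring
    refine ⟨?_, ?_, ?_⟩
    · rw [hexp]
      simp [h0, Polynomial.coeff_mul_X_zero]
    · have hm : (r k * X).coeff 1 = (r k).coeff 0 := Polynomial.coeff_mul_X (r k) 0
      rw [hexp, Polynomial.coeff_add, Polynomial.coeff_C_mul, hm, h0, h1, hh_succ]
      ring
    · have hm : (r k * X).coeff 2 = (r k).coeff 1 := Polynomial.coeff_mul_X (r k) 1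
      rw [hexp, Polynomial.coeff_add, Polynomial.coeff_C_mul, hm, h1, h2, D_succ]
      ring

lemma q_eval (ε : ℚ) (k : ℕ) :
    ch (-1/2 + ε) k * (-4 : ℚ) ^ k = ((2 * k).choose k : ℚ) * (q k).eval ε := by
  induction k with
  | zero => simp [ch_zero, q]
  | succ k ih =>
    have hcb : ((k : ℚ) + 1) * ((2 * (k + 1)).choose (k + 1) : ℚ)
        = 2 * (2 * (k : ℚ) + 1) * ((2 * k).choose k : ℚ) := by
      have hnat := Nat.succ_mul_centralBinom_succ k
      simp only [Nat.centralBinom] at hnat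
      exact_mod_cast congrArg (fun t : ℕ => (t : ℚ)) hnat
    rw [ch_succ, pow_succ, show q (k + 1) = q k * (1 - Polynomial.C (2 / (2 * (k : ℚ) + 1)) * X)
      from rfl, Polynomial.eval_mul]
    simp only [Polynomial.eval_sub, Polynomial.eval_mul, Polynomial.eval_one, Polynomial.eval_C,
      Polynomial.eval_X]
    have hk1 : ((k:ℚ) + 1) ≠ 0 := by positivity
    have hk2 : (2 * (k:ℚ) + 1) ≠ 0 := by positivity
    have hc' : ((2 * (k + 1)).choose (k + 1) : ℚ)
        = 2 * (2 * (k : ℚ) + 1) * ((2 * k).choose k : ℚ) / ((k : ℚ) + 1) := by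
      field_simp
      linear_combination hcb
    calc ch (-1/2 + ε) k * (-1/2 + ε - (k : ℚ)) / ((k : ℚ) + 1) * ((-4 : ℚ) ^ k * -4)
        = (ch (-1/2 + ε) k * (-4 : ℚ) ^ k) * ((-4) * (-1/2 + ε - (k : ℚ)) / ((k : ℚ) + 1)) := by
          ring
      _ = (((2 * k).choose k : ℚ) * (q k).eval ε)
            * ((-4) * (-1/2 + ε - (k : ℚ)) / ((k : ℚ) + 1)) := by rw [ih]
      _ = ((2 * (k + 1)).choose (k + 1) : ℚ)
            * ((q k).eval ε * (1 - 2 / (2 * (k : ℚ) + 1) * ε)) := by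
          rw [hc']
          field_simp
          ring

lemma r_eval (ε : ℚ) (k : ℕ) :
    ch (-1/2 - ε) k * (-4 : ℚ) ^ k = ((2 * k).choose k : ℚ) * (r k).eval ε := by
  induction k with
  | zero => simp [ch_zero, r]
  | succ k ih =>
    have hcb : ((k : ℚ) + 1) * ((2 * (k + 1)).choose (k + 1) : ℚ)
        = 2 * (2 * (k : ℚ) + 1) * ((2 * k).choose k : ℚ) := by
      have hnat := Nat.succ_mul_centralBinom_succ k
      simp only [Nat.centralBinom] at hnat
      exact_mod_cast congrArg (fun t : ℕ => (t : ℚ)) hnat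
    rw [ch_succ, pow_succ, show r (k + 1) = r k * (1 + Polynomial.C (2 / (2 * (k : ℚ) + 1)) * X)
      from rfl, Polynomial.eval_mul]
    simp only [Polynomial.eval_add, Polynomial.eval_mul, Polynomial.eval_one, Polynomial.eval_C,
      Polynomial.eval_X]
    have hk1 : ((k:ℚ) + 1) ≠ 0 := by positivity
    have hk2 : (2 * (k:ℚ) + 1) ≠ 0 := by positivity
    have hc' : ((2 * (k + 1)).choose (k + 1) : ℚ)
        = 2 * (2 * (k : ℚ) + 1) * ((2 * k).choose k : ℚ) / ((k : ℚ) + 1) := by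
      field_simp
      linear_combination hcb
    calc ch (-1/2 - ε) k * (-1/2 - ε - (k : ℚ)) / ((k : ℚ) + 1) * ((-4 : ℚ) ^ k * -4)
        = (ch (-1/2 - ε) k * (-4 : ℚ) ^ k) * ((-4) * (-1/2 - ε - (k : ℚ)) / ((k : ℚ) + 1)) := by
          ring
      _ = (((2 * k).choose k : ℚ) * (r k).eval ε)
            * ((-4) * (-1/2 - ε - (k : ℚ)) / ((k : ℚ) + 1)) := by rw [ih]
      _ = ((2 * (k + 1)).choose (k + 1) : ℚ)
            * ((r k).eval ε * (1 + 2 / (2 * (k : ℚ) + 1) * ε)) := by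
          rw [hc']
          field_simp
          ring

theorem odd_sum_D_vanishes (n : ℕ) (hn : Odd n) :
    ∑ k ∈ Finset.range (n + 1),
        (n.choose k : ℚ) * ((n + k).choose k : ℚ)
          * (((2 * k).choose k : ℚ) / (-4 : ℚ) ^ k) * D k = 0 := by
  set E : ℚ[X] := ∑ k ∈ Finset.range (n + 1),
      Polynomial.C ((n.choose k : ℚ) * ((n + k).choose k : ℚ) * ((2 * k).choose k : ℚ)
        / (-4 : ℚ) ^ k) * (q k + r k) with hE
  have hEeval : ∀ ε : ℚ, E.eval ε = 0 := by
    intro ε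
    rw [hE, Polynomial.eval_finset_sum]
    have hterm : ∀ k ∈ Finset.range (n + 1),
        (Polynomial.C ((n.choose k : ℚ) * ((n + k).choose k : ℚ) * ((2 * k).choose k : ℚ)
            / (-4 : ℚ) ^ k) * (q k + r k)).eval ε
          = (n.choose k : ℚ) * ((n + k).choose k : ℚ) * ch (-1/2 + ε) k
            + (n.choose k : ℚ) * ((n + k).choose k : ℚ) * ch (-1/2 - ε) k := by
      intro k _
      have hq := q_eval ε k
      have hr := r_eval ε k
      have h4 : ((-4 : ℚ)) ^ k ≠ 0 := by
        apply pow_ne_zero; norm_num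
      have hC2 : ((2 * k).choose k : ℚ) ≠ 0 := by
        exact_mod_cast Nat.choose_pos (by omega : k ≤ 2 * k) |>.ne'
      set A := ch (-1/2 + ε) k with hA
      set B := ch (-1/2 - ε) k with hB
      have hqe : (q k).eval ε = A * (-4 : ℚ) ^ k / ((2 * k).choose k : ℚ) := by
        field_simp
        linear_combination -hq
      have hre : (r k).eval ε = B * (-4 : ℚ) ^ k / ((2 * k).choose k : ℚ) := by
        field_simp
        linear_combination -hr
      rw [Polynomial.eval_mul, Polynomial.eval_C, Polynomial.eval_add, hqe, hre]
      field_simp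
    rw [Finset.sum_congr rfl hterm, Finset.sum_add_distrib]
    have hpar := parity n hn (-1/2 + ε)
    rw [show (-1 : ℚ) - (-1/2 + ε) = -1/2 - ε by ring] at hpar
    rw [hpar]
    ring
  have hE0 : E = 0 := by
    apply Polynomial.funext
    intro x
    rw [hEeval x, Polynomial.eval_zero]
  have hc2 : E.coeff 2 = 0 := by rw [hE0]; simp
  rw [hE, finset_sum_coeff] at hc2
  have hsum : ∑ k ∈ Finset.range (n + 1),
      (Polynomial.C ((n.choose k : ℚ) * ((n + k).choose k : ℚ) * ((2 * k).choose k : ℚ)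
        / (-4 : ℚ) ^ k) * (q k + r k)).coeff 2
      = 4 * ∑ k ∈ Finset.range (n + 1),
          (n.choose k : ℚ) * ((n + k).choose k : ℚ)
            * (((2 * k).choose k : ℚ) / (-4 : ℚ) ^ k) * D k := by
    rw [Finset.mul_sum]
    refine Finset.sum_congr rfl fun k _ => ?_
    obtain ⟨_, _, hq2⟩ := q_coeffs k
    obtain ⟨_, _, hr2⟩ := r_coeffs k
    rw [Polynomial.coeff_C_mul, Polynomial.coeff_add, hq2, hr2]
    ring
  rw [hsum] at hc2
  linarith
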